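/- Let n ≥ 2, d ≥ 2, and let k₀ be the largest integer k ≥ 0 with k(k+1)/2 < n−1 (k₀ = 0 when n = 2). Let f₁,…,f_P be linearly independent homogeneous polynomials of degree d−1 in ℂ[z₁,…,zₙ], and let ρ be the ℂ-dimension of the degree-d homogeneous component of the ideal ⟨f₁,…,f_P⟩ (this equals the rank of the Hermitian squared norm ‖f(z)‖²‖z‖²). Then either ρ ≥ (k₀+1)n − k₀(k₀+1)/2, or there exists an integer 0 ≤ k ≤ k₀ such that nk − k(k−1)/2 ≤ ρ ≤ nk. -/

import Mathlib

open MvPolynomial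

/-- The degree-`ℓ` homogeneous component of an ideal `I`, as a subspace. -/
noncomputable def idealDegComp {n : ℕ} (I : Ideal (MvPolynomial (Fin n) ℂ)) (ℓ : ℕ) :
    Submodule ℂ (MvPolynomial (Fin n) ℂ) where
  carrier := {p | p ∈ I ∧ p.IsHomogeneous ℓ}
  add_mem' := fun ha hb => ⟨I.add_mem ha.1 hb.1, ha.2.add hb.2⟩
  zero_mem' := ⟨I.zero_mem, MvPolynomial.isHomogeneous_zero _ _ _⟩
  smul_mem' := fun c p hp =>
    ⟨by simpa [MvPolynomial.smul_eq_C_mul] using I.mul_mem_left (MvPolynomial.C c) hp.1,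
     by simpa [MvPolynomial.smul_eq_C_mul] using hp.2.C_mul c⟩

noncomputable section SOSAux

variable {n : ℕ}

private def toLexEmb : (Fin n →₀ ℕ) ↪ Lex (Fin n →₀ ℕ) :=
  (toLex (α := Fin n →₀ ℕ)).toEmbedding

@[simp] private lemma toLexEmb_apply (a : Fin n →₀ ℕ) : toLexEmb a = toLex a := rfl

private lemma support_map_ne (p : MvPolynomial (Fin n) ℂ) (hp : p ≠ 0) :
    (p.support.map (toLexEmb (n := n))).Nonempty :=
  (MvPolynomial.support_nonempty.mpr hp).map

private def lmon (p : MvPolynomial (Fin n) ℂ) (hp : p ≠ 0) : Lex (Fin n →₀ ℕ) :=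
  (p.support.map toLexEmb).max' (support_map_ne p hp)

private lemma lmon_mem (p : MvPolynomial (Fin n) ℂ) (hp : p ≠ 0) :
    ofLex (lmon p hp) ∈ p.support := by
  have h := (p.support.map toLexEmb).max'_mem (support_map_ne p hp)
  rw [Finset.mem_map] at h
  obtain ⟨a, ha, hae⟩ := h
  rw [show lmon p hp = toLexEmb a from hae.symm]
  simpa [toLexEmb] using ha

private lemma coeff_lmon (p : MvPolynomial (Fin n) ℂ) (hp : p ≠ 0) :
    MvPolynomial.coeff (ofLex (lmon p hp)) p ≠ 0 :=
  MvPolynomial.mem_support_iff.mp (lmon_mem p hp)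

private lemma le_lmon {p : MvPolynomial (Fin n) ℂ} (hp : p ≠ 0) {a : Fin n →₀ ℕ}
    (ha : a ∈ p.support) : toLex a ≤ lmon p hp :=
by
  have := Finset.le_max' (p.support.map toLexEmb) (toLexEmb a)
    (Finset.mem_map_of_mem _ ha)
  exact this

private lemma lmon_X_mul (j : Fin n) (p : MvPolynomial (Fin n) ℂ) (hp : p ≠ 0)
    (hq : MvPolynomial.X j * p ≠ 0) :
    lmon (MvPolynomial.X j * p) hq = toLex (Finsupp.single j 1 + ofLex (lmon p hp)) := by
  apply le_antisymm
  · apply Finset.max'_le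
    intro m hm
    rw [Finset.mem_map] at hm
    obtain ⟨a, ha, rfl⟩ := hm
    rw [MvPolynomial.support_X_mul, Finset.mem_map] at ha
    obtain ⟨b, hb, rfl⟩ := ha
    show toLex (addLeftEmbedding (Finsupp.single j 1) b) ≤ _
    rw [addLeftEmbedding_apply, toLex_add, toLex_add]
    exact add_le_add_right (le_lmon hp hb) _
  · apply Finset.le_max'
    rw [Finset.mem_map]
    refine ⟨Finsupp.single j 1 + ofLex (lmon p hp), ?_, rfl⟩
    rw [MvPolynomial.support_X_mul, Finset.mem_map]
    exact ⟨ofLex (lmon p hp), lmon_mem p hp, addLeftEmbedding_apply _ _⟩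

private lemma linIndep_of_lmon {S : Finset (Lex (Fin n →₀ ℕ))}
    (p : {m // m ∈ S} → MvPolynomial (Fin n) ℂ)
    (h0 : ∀ m, p m ≠ 0) (hlm : ∀ m, lmon (p m) (h0 m) = (m : Lex (Fin n →₀ ℕ))) :
    LinearIndependent ℂ p := by
  classical
  rw [linearIndependent_iff']
  intro t g hg i hit
  by_contra hgi
  set t' := t.filter (fun i => g i ≠ 0) with ht'
  have ht'ne : t'.Nonempty := ⟨i, Finset.mem_filter.mpr ⟨hit, hgi⟩⟩
  obtain ⟨i₀, hi₀t', hi₀max⟩ :=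
    t'.exists_max_image (fun i => (i : Lex (Fin n →₀ ℕ))) ht'ne
  have hg₀ : g i₀ ≠ 0 := (Finset.mem_filter.mp hi₀t').2
  have h0' : (0:ℂ) = ∑ i ∈ t, g i * MvPolynomial.coeff (ofLex (i₀ : Lex (Fin n →₀ ℕ))) (p i) := by
    have := congrArg (MvPolynomial.coeff (ofLex (i₀ : Lex (Fin n →₀ ℕ)))) hg
    simp only [MvPolynomial.coeff_sum, MvPolynomial.coeff_smul, smul_eq_mul,
      MvPolynomial.coeff_zero] at this
    exact this.symm
  rw [Finset.sum_eq_single i₀] at h0'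
  · exact hg₀ (by
      have hc := coeff_lmon (p i₀) (h0 i₀)
      rw [hlm i₀] at hc
      rcases mul_eq_zero.mp h0'.symm with h | h
      · exact h
      · exact absurd h hc)
  · intro b hbt hbne
    by_cases hgb : g b = 0
    · rw [hgb, zero_mul]
    · have hbt' : b ∈ t' := Finset.mem_filter.mpr ⟨hbt, hgb⟩
      have hble : (b : Lex (Fin n →₀ ℕ)) ≤ (i₀ : Lex (Fin n →₀ ℕ)) := hi₀max b hbt'
      have hblt : (b : Lex (Fin n →₀ ℕ)) < (i₀ : Lex (Fin n →₀ ℕ)) :=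
        lt_of_le_of_ne hble (fun h => hbne (Subtype.ext h))
      have hcz : MvPolynomial.coeff (ofLex (i₀ : Lex (Fin n →₀ ℕ))) (p b) = 0 := by
        by_contra hcne
        have hmem : ofLex (i₀ : Lex (Fin n →₀ ℕ)) ∈ (p b).support :=
          MvPolynomial.mem_support_iff.mpr hcne
        have := le_lmon (h0 b) hmem
        rw [hlm b] at this
        exact absurd this (not_le.mpr hblt)
      rw [hcz, mul_zero]
  · intro hi₀t
    exact absurd (Finset.filter_subset _ _ hi₀t') hi₀t

private lemma support_span {ι : Type*} (f : ι → MvPolynomial (Fin n) ℂ) (T : Finset (Fin n →₀ ℕ))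
    (hT : ∀ i, (f i).support ⊆ T)
    {p : MvPolynomial (Fin n) ℂ} (hp : p ∈ Submodule.span ℂ (Set.range f)) :
    p.support ⊆ T := by
  induction hp using Submodule.span_induction with
  | mem x hx =>
    obtain ⟨i, rfl⟩ := hx
    exact hT i
  | zero => simp
  | add x y _ _ hx hy => exact MvPolynomial.support_add.trans (Finset.union_subset hx hy)
  | smul c x _ hx => exact (MvPolynomial.support_smul (R := ℂ)).trans hx

private lemma exists_lmon_finset {P : ℕ} (f : Fin P → MvPolynomial (Fin n) ℂ)
    (hind : LinearIndependent ℂ f) :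
    ∃ S : Finset (Lex (Fin n →₀ ℕ)), S.card = P ∧
      ∀ m ∈ S, ∃ p ∈ Submodule.span ℂ (Set.range f), ∃ hp : p ≠ 0, lmon p hp = m := by
  classical
  set W := Submodule.span ℂ (Set.range f) with hW
  haveI : FiniteDimensional ℂ W := FiniteDimensional.span_of_finite ℂ (Set.finite_range f)
  set T : Finset (Fin n →₀ ℕ) := Finset.univ.biUnion (fun i => (f i).support) with hTdef
  set S' : Finset (Lex (Fin n →₀ ℕ)) :=
    (T.map toLexEmb).filter (fun m => ∃ p ∈ W, ∃ hp : p ≠ 0, lmon p hp = m) with hS'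
  have hlmS' : ∀ (p : MvPolynomial (Fin n) ℂ) (hpW : p ∈ W) (hp : p ≠ 0), lmon p hp ∈ S' := by
    intro p hpW hp
    refine Finset.mem_filter.mpr ⟨?_, p, hpW, hp, rfl⟩
    have hsub : p.support ⊆ T :=
      support_span f T (fun i => by rw [hTdef]; exact Finset.subset_biUnion_of_mem (fun i => (f i).support) (Finset.mem_univ i)) hpW
    have := (p.support.map toLexEmb).max'_mem (support_map_ne p hp)
    exact Finset.map_subset_map.mpr hsub this
  have hinj : Function.Injective
      (LinearMap.pi (fun m : {m // m ∈ S'} =>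
        (MvPolynomial.lcoeff ℂ (ofLex (m : Lex (Fin n →₀ ℕ)))).comp W.subtype)) := by
    rw [← LinearMap.ker_eq_bot, LinearMap.ker_eq_bot']
    intro x hx
    by_contra hxne
    have hp : (x : MvPolynomial (Fin n) ℂ) ≠ 0 := fun h => hxne (Subtype.ext h)
    have hmem := hlmS' x x.2 hp
    have := congrFun hx ⟨lmon x hp, hmem⟩
    simp only [LinearMap.pi_apply, LinearMap.comp_apply, Submodule.coe_subtype,
      MvPolynomial.lcoeff_apply, Pi.zero_apply] at this
    exact coeff_lmon _ hp this
  have hcard : P ≤ S'.card := by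
    have h1 : Module.finrank ℂ W = P := by
      rw [hW, finrank_span_eq_card hind, Fintype.card_fin]
    have h2 : Module.finrank ℂ W ≤ Module.finrank ℂ ({m // m ∈ S'} → ℂ) :=
      LinearMap.finrank_le_finrank_of_injective hinj
    rwa [h1, Module.finrank_pi, Fintype.card_coe] at h2
  obtain ⟨S, hSsub, hScard⟩ := Finset.exists_subset_card_eq hcard
  exact ⟨S, hScard, fun m hm => (Finset.mem_filter.mp (hSsub hm)).2⟩

private lemma collision {a b : Fin n →₀ ℕ} (hab : a ≠ b) {j k j' k' : Fin n}
    (h1 : Finsupp.single j 1 + a = Finsupp.single j' 1 + b)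
    (h2 : Finsupp.single k 1 + a = Finsupp.single k' 1 + b) : j = k := by
  by_cases hjj' : j = j'
  · subst hjj'
    exact (hab (add_left_cancel h1)).elim
  by_contra hjk
  have e1 := DFunLike.congr_fun h1 j
  have e2 := DFunLike.congr_fun h2 j
  simp only [Finsupp.add_apply, Finsupp.single_apply] at e1 e2
  rw [if_pos trivial, if_neg (fun h => hjj' h.symm)] at e1
  rw [if_neg (fun h => hjk h.symm)] at e2
  have hb : b j = 1 + a j := by omega
  rw [hb] at e2
  split_ifs at e2 <;> omega

private def Fadd : Fin n × (Fin n →₀ ℕ) → (Fin n →₀ ℕ) :=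
  fun ja => Finsupp.single ja.1 1 + ja.2

private lemma card_shift (s : Finset (Fin n →₀ ℕ)) :
    n * s.card ≤ ((Finset.univ ×ˢ s).image Fadd).card + s.card * (s.card - 1) / 2 := by
  classical
  induction s using Finset.induction_on with
  | empty => simp
  | @insert a t ha ih =>
    have hprod : (Finset.univ ×ˢ insert a t) = ((Finset.univ : Finset (Fin n)) ×ˢ ({a} : Finset (Fin n →₀ ℕ))) ∪ (Finset.univ ×ˢ t) := by
      rw [Finset.insert_eq, Finset.product_union]
    set A : Finset (Fin n →₀ ℕ) := (Finset.univ ×ˢ ({a} : Finset (Fin n →₀ ℕ))).image Fadd with hA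
    set B : Finset (Fin n →₀ ℕ) := (Finset.univ ×ˢ t).image Fadd with hB
    have himg : ((Finset.univ ×ˢ insert a t).image Fadd) = A ∪ B := by
      rw [hprod, Finset.image_union]
    have hAeq : A = Finset.univ.image (fun j : Fin n => Finsupp.single j 1 + a) := by
      ext x
      simp [hA, Fadd]
    have hAcard : A.card = n := by
      rw [hAeq, Finset.card_image_of_injective _ (fun j1 j2 h => by
        have := add_right_cancel h
        exact Finsupp.single_left_injective (one_ne_zero) this), Finset.card_univ,
        Fintype.card_fin]
    have hIcard : (A ∩ B).card ≤ t.card := by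
      have hsub : A ∩ B ⊆ t.biUnion (fun b =>
          A ∩ (Finset.univ.image (fun j : Fin n => Finsupp.single j 1 + b))) := by
        intro x hx
        rw [Finset.mem_inter] at hx
        obtain ⟨hxA, hxB⟩ := hx
        rw [hB, Finset.mem_image] at hxB
        obtain ⟨⟨j', b⟩, hmem, hxeq⟩ := hxB
        rw [Finset.mem_product] at hmem
        refine Finset.mem_biUnion.mpr ⟨b, hmem.2, Finset.mem_inter.mpr ⟨hxA, ?_⟩⟩
        exact Finset.mem_image.mpr ⟨j', Finset.mem_univ _, hxeq⟩
      refine (Finset.card_le_card hsub).trans ((Finset.card_biUnion_le).trans ?_)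
      have : ∀ b ∈ t, (A ∩ (Finset.univ.image (fun j : Fin n => Finsupp.single j 1 + b))).card ≤ 1 := by
        intro b hb
        rw [Finset.card_le_one]
        intro x hx y hy
        rw [Finset.mem_inter, hAeq, Finset.mem_image, Finset.mem_image] at hx hy
        obtain ⟨⟨jx, _, hjx⟩, ⟨jx', _, hjx'⟩⟩ := hx
        obtain ⟨⟨jy, _, hjy⟩, ⟨jy', _, hjy'⟩⟩ := hy
        have hab : a ≠ b := fun h => ha (h ▸ hb)
        have hjxy : jx = jy :=
          collision hab (hjx.trans hjx'.symm) (hjy.trans hjy'.symm)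
        rw [← hjx, ← hjy, hjxy]
      calc ∑ b ∈ t, (A ∩ (Finset.univ.image (fun j : Fin n => Finsupp.single j 1 + b))).card
          ≤ ∑ _b ∈ t, 1 := Finset.sum_le_sum this
        _ = t.card := by simp
    have hU : (A ∪ B).card + (A ∩ B).card = A.card + B.card :=
      Finset.card_union_add_card_inter _ _
    rw [himg, Finset.card_insert_of_notMem ha]
    set c := t.card with hc
    have htri : (c + 1) * ((c + 1) - 1) / 2 = c * (c - 1) / 2 + c := by
      have h2 : (c + 1) * ((c + 1) - 1) = c * (c - 1) + c * 2 := by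
        cases c with
        | zero => rfl
        | succ k => simp only [Nat.add_sub_cancel]; ring
      rw [h2, Nat.add_mul_div_right _ _ (by norm_num : (0:ℕ) < 2)]
    rw [Nat.mul_succ, htri]
    have hIH : n * c ≤ B.card + c * (c - 1) / 2 := ih
    omega

private lemma lower_bound {P : ℕ} (f : Fin P → MvPolynomial (Fin n) ℂ)
    (hind : LinearIndependent ℂ f)
    (W' : Submodule ℂ (MvPolynomial (Fin n) ℂ)) [Module.Finite ℂ W']
    (hW' : ∀ (j : Fin n) (i : Fin P), MvPolynomial.X j * f i ∈ W') :
    n * P ≤ Module.finrank ℂ W' + P * (P - 1) / 2 := by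
  classical
  obtain ⟨S, hScard, hSreal⟩ := exists_lmon_finset f hind
  set s : Finset (Fin n →₀ ℕ) := S.image (fun m => ofLex m) with hs
  have hscard : s.card = P := by
    rw [hs, Finset.card_image_of_injective _ (ofLex (α := Fin n →₀ ℕ)).injective, hScard]
  set s' : Finset (Fin n →₀ ℕ) := (Finset.univ ×ˢ s).image Fadd with hs'
  have h1 : n * P ≤ s'.card + P * (P - 1) / 2 := by
    have := card_shift s
    rwa [hscard] at this
  refine h1.trans (Nat.add_le_add_right ?_ _)
  -- show s'.card ≤ finrank W'
  set S'' : Finset (Lex (Fin n →₀ ℕ)) := s'.map toLexEmb with hS''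
  have hrealize : ∀ m : {m // m ∈ S''}, ∃ q, q ∈ W' ∧ ∃ hq : q ≠ 0,
      lmon q hq = (m : Lex (Fin n →₀ ℕ)) := by
    rintro ⟨m, hm⟩
    rw [hS'', Finset.mem_map] at hm
    obtain ⟨x, hx, rfl⟩ := hm
    rw [hs', Finset.mem_image] at hx
    obtain ⟨⟨j, b⟩, hmem, rfl⟩ := hx
    rw [Finset.mem_product] at hmem
    have hbs : b ∈ s := hmem.2
    rw [hs, Finset.mem_image] at hbs
    obtain ⟨m₀, hm₀S, rfl⟩ := hbs
    obtain ⟨p, hpW, hp, hlmp⟩ := hSreal m₀ hm₀S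
    have hq : MvPolynomial.X j * p ≠ 0 := mul_ne_zero (MvPolynomial.X_ne_zero (R := ℂ) (σ := Fin n) j) hp
    refine ⟨MvPolynomial.X j * p, ?_, hq, ?_⟩
    · obtain ⟨c, hc⟩ := Submodule.mem_span_range_iff_exists_fun ℂ |>.mp hpW
      rw [← hc, Finset.mul_sum]
      refine Submodule.sum_mem _ (fun i _ => ?_)
      rw [mul_smul_comm]
      exact Submodule.smul_mem _ _ (hW' j i)
    · rw [lmon_X_mul j p hp hq, hlmp]
      rfl
  choose q hqW hq0 hqlm using hrealize
  have hli : LinearIndependent ℂ q := linIndep_of_lmon q hq0 hqlm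
  have h3 : Module.finrank ℂ (Submodule.span ℂ (Set.range q)) = Fintype.card {m // m ∈ S''} :=
    finrank_span_eq_card hli
  have h4 : Submodule.span ℂ (Set.range q) ≤ W' := by
    rw [Submodule.span_le]
    rintro x ⟨m, rfl⟩
    exact hqW m
  have h5 := Submodule.finrank_mono (R := ℂ) h4
  rw [h3, Fintype.card_coe, hS'', Finset.card_map] at h5
  exact h5

private lemma homComp_mul {d : ℕ} (hd : 2 ≤ d) {fi q : MvPolynomial (Fin n) ℂ}
    (hfi : fi.IsHomogeneous (d - 1)) :
    homogeneousComponent d (q * fi) = homogeneousComponent 1 q * fi := by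
  classical
  have hq : ∑ i ∈ Finset.range (q.totalDegree + 2), homogeneousComponent i q = q := by
    rw [Finset.sum_range_succ, homogeneousComponent_eq_zero _ q (Nat.lt_succ_self _), add_zero,
      sum_homogeneousComponent]
  conv_lhs => rw [← hq, Finset.sum_mul, map_sum]
  rw [Finset.sum_eq_single 1]
  · have h1 : (homogeneousComponent 1 q * fi).IsHomogeneous d := by
      have := (homogeneousComponent_isHomogeneous 1 q).mul hfi
      rwa [show 1 + (d - 1) = d by omega] at this
    rw [homogeneousComponent_of_mem h1, if_pos rfl]
  · intro i _ hne
    have h2 := (homogeneousComponent_isHomogeneous i q).mul hfi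
    rw [homogeneousComponent_of_mem h2, if_neg (by omega : ¬ d = i + (d - 1))]
  · intro h1N
    exact absurd (Finset.mem_range.mpr (by omega)) h1N

private lemma eq_single_of_degree_one {a : Fin n →₀ ℕ} (h : Finsupp.degree a = 1) :
    ∃ j, a = Finsupp.single j 1 := by
  classical
  have hne : a ≠ 0 := by
    intro h0
    rw [h0, map_zero] at h
    omega
  obtain ⟨j, hj⟩ := Finsupp.support_nonempty_iff.mpr hne
  refine ⟨j, ?_⟩
  have hja : 1 ≤ a j := Nat.one_le_iff_ne_zero.mpr (Finsupp.mem_support_iff.mp hj)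
  ext k
  rw [Finsupp.single_apply]
  by_cases hkj : j = k
  · subst hkj
    rw [if_pos rfl]
    have := Finsupp.le_degree j a
    omega
  · rw [if_neg hkj]
    by_contra hak
    have hk : k ∈ a.support := Finsupp.mem_support_iff.mpr hak
    have hsub : ({j, k} : Finset (Fin n)) ⊆ a.support := by
      intro x hx
      rcases Finset.mem_insert.mp hx with rfl | hx
      · exact hj
      · rwa [Finset.mem_singleton.mp hx]
    have hsum : a j + a k ≤ Finsupp.degree a := by
      have h2 := Finset.sum_le_sum_of_subset hsub (f := fun i => a i)
      rwa [Finset.sum_insert (by simpa using hkj), Finset.sum_singleton] at h2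
    have hak1 : 1 ≤ a k := Nat.one_le_iff_ne_zero.mpr hak
    omega

private lemma degree_one_mem {P : ℕ} (f : Fin P → MvPolynomial (Fin n) ℂ) (i : Fin P)
    {q1 : MvPolynomial (Fin n) ℂ} (hq1 : q1.IsHomogeneous 1) :
    q1 * f i ∈ Submodule.span ℂ
      (Set.range fun ji : Fin n × Fin P => MvPolynomial.X ji.1 * f ji.2) := by
  classical
  rw [q1.as_sum, Finset.sum_mul]
  refine Submodule.sum_mem _ (fun a ha => ?_)
  have hdeg : Finsupp.degree a = 1 := by
    by_contra hne
    exact MvPolynomial.mem_support_iff.mp ha (hq1.coeff_eq_zero hne)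
  obtain ⟨j, rfl⟩ := eq_single_of_degree_one hdeg
  have hmono : (monomial (Finsupp.single j 1)) (MvPolynomial.coeff (Finsupp.single j 1) q1)
      = MvPolynomial.coeff (Finsupp.single j 1) q1 • MvPolynomial.X j := by
    rw [MvPolynomial.smul_eq_C_mul, MvPolynomial.C_mul_X_eq_monomial]
  rw [hmono, smul_mul_assoc]
  exact Submodule.smul_mem _ _ (Submodule.subset_span ⟨(j, i), rfl⟩)


private lemma idealDegComp_eq {n P d : ℕ} (hd : 2 ≤ d) (f : Fin P → MvPolynomial (Fin n) ℂ)
    (hf : ∀ j, (f j).IsHomogeneous (d - 1)) :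
    idealDegComp (Ideal.span (Set.range f)) d
      = Submodule.span ℂ (Set.range fun ji : Fin n × Fin P => MvPolynomial.X ji.1 * f ji.2) := by
  classical
  apply le_antisymm
  · intro p hp
    obtain ⟨hpI, hph⟩ := hp
    obtain ⟨c, hc⟩ := Ideal.mem_span_range_iff_exists_fun.mp hpI
    have h1 : homogeneousComponent d p = p := by
      rw [homogeneousComponent_of_mem hph, if_pos rfl]
    have hpc : p = ∑ i, homogeneousComponent 1 (c i) * f i := by
      conv_lhs => rw [← h1, ← hc, map_sum]
      exact Finset.sum_congr rfl fun i _ => homComp_mul hd (hf i)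
    rw [hpc]
    exact Submodule.sum_mem _ fun i _ =>
      degree_one_mem f i (homogeneousComponent_isHomogeneous 1 (c i))
  · rw [Submodule.span_le]
    rintro x ⟨⟨j, i⟩, rfl⟩
    refine ⟨Ideal.mul_mem_left _ _ (Ideal.subset_span ⟨i, rfl⟩), ?_⟩
    have := (isHomogeneous_X ℂ j).mul (hf i)
    rwa [show 1 + (d - 1) = d by omega] at this

end SOSAux


/-- **Theorem 3.4: the SOS Conjecture holds for signature pair `(P,0)`.**
If `f₁,…,f_P` are linearly independent homogeneous polynomials of degree
`d−1` in `ℂ[z₁,…,zₙ]` and `ρ = dim_ℂ (⟨f₁,…,f_P⟩)_d` (the rank of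
`‖f(z)‖²‖z‖²`), then either `ρ ≥ (k₀+1)n − k₀(k₀+1)/2`, or
`nk − k(k−1)/2 ≤ ρ ≤ nk` for some `0 ≤ k ≤ k₀`, where `k₀` is the largest
integer `k ≥ 0` with `k(k+1)/2 < n−1`. -/
theorem sos_positive_definite_case
    {n : ℕ} (hn : 2 ≤ n) {d : ℕ} (hd : 2 ≤ d) {P : ℕ}
    (k₀ : ℕ) (hk₀ : k₀ * (k₀ + 1) / 2 < n - 1)
    (hk₀max : ∀ k : ℕ, k * (k + 1) / 2 < n - 1 → k ≤ k₀)
    (f : Fin P → MvPolynomial (Fin n) ℂ)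
    (hf : ∀ j, (f j).IsHomogeneous (d - 1))
    (hind : LinearIndependent ℂ f)
    (ρ : ℕ)
    (hρ : ρ = Module.finrank ℂ (idealDegComp (Ideal.span (Set.range f)) d)) :
    (k₀ + 1) * n - k₀ * (k₀ + 1) / 2 ≤ ρ ∨
      ∃ k : ℕ, k ≤ k₀ ∧ n * k - k * (k - 1) / 2 ≤ ρ ∧ ρ ≤ n * k := by
  classical
  set g : Fin n × Fin P → MvPolynomial (Fin n) ℂ :=
    fun ji => MvPolynomial.X ji.1 * f ji.2 with hg
  have heq : idealDegComp (Ideal.span (Set.range f)) d = Submodule.span ℂ (Set.range g) :=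
    idealDegComp_eq hd f hf
  haveI hfin : Module.Finite ℂ (idealDegComp (Ideal.span (Set.range f)) d) := by
    rw [heq]
    exact FiniteDimensional.span_of_finite ℂ (Set.finite_range g)
  have hub : ρ ≤ n * P := by
    rw [hρ, heq]
    have h1 : Set.range g = ↑(Finset.univ.image g) := by
      rw [Finset.coe_image, Finset.coe_univ, Set.image_univ]
    rw [h1]
    refine le_trans (finrank_span_finset_le_card _) ?_
    refine le_trans Finset.card_image_le ?_
    simp [Fintype.card_prod]
  have hprods : ∀ (j : Fin n) (i : Fin P),
      MvPolynomial.X j * f i ∈ idealDegComp (Ideal.span (Set.range f)) d := by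
    intro j i
    rw [heq]
    exact Submodule.subset_span ⟨(j, i), rfl⟩
  by_cases hP : P ≤ k₀
  · right
    refine ⟨P, hP, ?_, by rw [mul_comm] at hub ⊢; exact hub⟩
    have hlb : n * P ≤ Module.finrank ℂ (idealDegComp (Ideal.span (Set.range f)) d)
        + P * (P - 1) / 2 := lower_bound f hind _ hprods
    rw [← hρ] at hlb
    omega
  · left
    push_neg at hP
    have hle : k₀ + 1 ≤ P := hP
    set f' : Fin (k₀ + 1) → MvPolynomial (Fin n) ℂ := f ∘ Fin.castLE hle with hf'
    have hind' : LinearIndependent ℂ f' :=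
      hind.comp (Fin.castLE hle) (Fin.castLE_injective hle)
    have hlb : n * (k₀ + 1) ≤ Module.finrank ℂ (idealDegComp (Ideal.span (Set.range f)) d)
        + (k₀ + 1) * ((k₀ + 1) - 1) / 2 :=
      lower_bound f' hind' _ (fun j i => hprods j (Fin.castLE hle i))
    rw [← hρ] at hlb
    have h2 : (k₀ + 1) * ((k₀ + 1) - 1) = k₀ * (k₀ + 1) := by
      simp [Nat.add_sub_cancel, mul_comm]
    rw [h2] at hlb
    have h3 : n * (k₀ + 1) = (k₀ + 1) * n := mul_comm _ _
    omega
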